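/- If a sequence of real numbers (r_n) converges classically to a dyadic rational r and r_n > r for all but finitely many n, then the s-limit of the sign expansions is the sign expansion of r + 1/ω (the expansion of r followed by ω minuses). -/

import Mathlib

open scoped Classical

noncomputable def slim {L M A : Type*} [LinearOrder L] [LinearOrder M]
    (a : L → M → Option A) : M → Option A := fun m =>
  if h : ∃ l0 : L, ∀ m' ≤ m, ∀ l, l0 ≤ l → ∀ l', l0 ≤ l' →
      a l m' = a l' m' ∧ (a l m').isSome
  then a h.choose m else none

noncomputable def slimIio {A : Type*} (α : Ordinal) (s : Ordinal → Ordinal → Option A) :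
    Ordinal → Option A :=
  slim (L := Set.Iio α) (fun β => s β.1)

abbrev SignStr := Ordinal → Option Bool

def signVal : Option Bool → ℕ
  | none => 1
  | some false => 0
  | some true => 2

def strLT (s t : SignStr) : Prop :=
  ∃ γ, (∀ β < γ, s β = t β) ∧ signVal (s γ) < signVal (t γ)

def strLE (s t : SignStr) : Prop := s = t ∨ strLT s t

noncomputable def ordStr (α : Ordinal) : SignStr := fun γ => if γ < α then some true else none

noncomputable def strLength {A : Type*} (a : Ordinal → Option A) : Ordinal :=
  sInf {γ | a γ = none}

noncomputable def strAppend {A : Type*} (a b : Ordinal → Option A) : Ordinal → Option A :=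
  fun γ => if γ < strLength a then a γ else b (γ - strLength a)

noncomputable def oneOverOmega : SignStr := fun γ =>
  if γ = 0 then some true else if γ < Ordinal.omega0 then some false else none

noncomputable def negOneOverOmega : SignStr := fun γ =>
  if γ = 0 then some false else if γ < Ordinal.omega0 then some true else none

def IsDyadic (x : ℝ) : Prop := ∃ (k : ℤ) (m : ℕ), x = k / 2 ^ m

noncomputable def cand : Option ℝ × Option ℝ → ℝ
  | (none, none) => 0
  | (some l, none) => l + 1
  | (none, some u) => u - 1
  | (some l, some u) => (l + u) / 2

noncomputable def signState (r : ℝ) : ℕ → Option ℝ × Option ℝ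
  | 0 => (none, none)
  | n + 1 =>
      let st := signState r n
      let c := cand st
      if c < r then (some c, st.2)
      else if r < c then (st.1, some c)
      else st

noncomputable def signAt (r : ℝ) (n : ℕ) : Option Bool :=
  let c := cand (signState r n)
  if c < r then some true else if r < c then some false else none

noncomputable def signExp (r : ℝ) : SignStr := fun γ =>
  if h : ∃ n : ℕ, γ = (n : Ordinal) then signAt r h.choose else none

lemma signState_succ (r : ℝ) (n : ℕ) :
    signState r (n+1) =
      if cand (signState r n) < r then (some (cand (signState r n)), (signState r n).2)
      else if r < cand (signState r n) then ((signState r n).1, some (cand (signState r n)))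
      else signState r n := rfl

lemma signState_bounds (r : ℝ) (n : ℕ) :
    (∀ l, (signState r n).1 = some l → l < r) ∧ (∀ u, (signState r n).2 = some u → r < u) := by
  induction n with
  | zero => simp [signState]
  | succ n ih =>
    rw [signState_succ]
    split_ifs with h1 h2 <;>
      exact ⟨fun l hl => by simp_all; try omega, fun u hu => by simp_all⟩

lemma signState_stationary (r : ℝ) (n : ℕ) (h : cand (signState r n) = r) :
    ∀ k, signState r (n + k) = signState r n := by
  intro k
  induction k with
  | zero => rfl
  | succ k ih =>
    have : n + (k+1) = (n+k) + 1 := rfl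
    rw [this, signState_succ, ih, h]
    simp

lemma signAt_eq_of_lt (y : ℝ) (n : ℕ) (h : cand (signState y n) < y) :
    signAt y n = some true := by simp [signAt, h]

lemma signAt_eq_of_gt (y : ℝ) (n : ℕ) (h : y < cand (signState y n)) :
    signAt y n = some false := by
  simp [signAt, h, asymm h]

lemma signState_stable (x : ℝ) (n : ℕ) (h : ∀ k < n, cand (signState x k) ≠ x) :
    ∃ ε > 0, ∀ y : ℝ, |y - x| < ε →
      (∀ k ≤ n, signState y k = signState x k) ∧ (∀ k < n, signAt y k = signAt x k) := by
  induction n with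
  | zero =>
    refine ⟨1, one_pos, fun y _ => ⟨fun k hk => ?_, fun k hk => absurd hk (Nat.not_lt_zero k)⟩⟩
    interval_cases k; rfl
  | succ n ih =>
    obtain ⟨ε, hε, hstab⟩ := ih (fun k hk => h k (Nat.lt_succ_of_lt hk))
    have hc : cand (signState x n) ≠ x := h n (Nat.lt_succ_self n)
    refine ⟨min ε |cand (signState x n) - x|, lt_min hε (abs_pos.2 (sub_ne_zero.2 hc)),
      fun y hy => ?_⟩
    have hy1 : |y - x| < ε := lt_of_lt_of_le hy (min_le_left _ _)
    have hy2 : |y - x| < |cand (signState x n) - x| := lt_of_lt_of_le hy (min_le_right _ _)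
    obtain ⟨hst, hsa⟩ := hstab y hy1
    have hstn : signState y n = signState x n := hst n le_rfl
    set c := cand (signState x n) with hcdef
    have hcmp : (c < x → c < y) ∧ (x < c → y < c) := by
      constructor <;> intro hlt
      · rw [abs_of_neg (by linarith : c - x < 0)] at hy2
        have := abs_lt.1 hy2; obtain ⟨h1, h2⟩ := this; linarith
      · rw [abs_of_pos (by linarith : (0:ℝ) < c - x)] at hy2
        have := abs_lt.1 hy2; obtain ⟨h1, h2⟩ := this; linarith
    have hsucc : signState y (n+1) = signState x (n+1) ∧ signAt y n = signAt x n := by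
      rcases lt_trichotomy c x with hlt | heq | hgt
      · have hy' : c < y := hcmp.1 hlt
        constructor
        · rw [signState_succ, signState_succ, hstn, ← hcdef, if_pos hlt, if_pos hy']
        · rw [signAt_eq_of_lt x n hlt, signAt_eq_of_lt y n (by rwa [hstn, ← hcdef])]
      · exact absurd heq hc
      · have hy' : y < c := hcmp.2 hgt
        constructor
        · rw [signState_succ, signState_succ, hstn, ← hcdef,
            if_neg (not_lt.2 hgt.le), if_neg (not_lt.2 hy'.le), if_pos hgt, if_pos hy']
        · rw [signAt_eq_of_gt x n hgt, signAt_eq_of_gt y n (by rwa [hstn, ← hcdef])]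
    refine ⟨fun k hk => ?_, fun k hk => ?_⟩
    · rcases Nat.lt_succ_iff_lt_or_eq.1 (Nat.lt_succ_of_le hk) with h' | h'
      · exact hst k (Nat.lt_succ_iff.1 h')
      · rw [h']; exact hsucc.1
    · rcases Nat.lt_succ_iff_lt_or_eq.1 hk with h' | h'
      · exact hsa k h'
      · rw [h']; exact hsucc.2


/-- Shape invariant for the search states, assuming the candidate never equals `x`. -/
lemma signState_shape (x : ℝ) (hnt : ∀ n, cand (signState x n) ≠ x) (n : ℕ) :
    signState x n = (none, none) ∨
    (∃ a : ℤ, signState x n = (some (a:ℝ), none) ∧ (a:ℝ) < x) ∨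
    (∃ a : ℤ, signState x n = (none, some (a:ℝ)) ∧ x < (a:ℝ)) ∨
    (∃ (a : ℤ) (j : ℕ), signState x n = (some ((a:ℝ)/2^j), some (((a:ℝ)+1)/2^j)) ∧
      (a:ℝ)/2^j < x ∧ x < ((a:ℝ)+1)/2^j) := by
  induction n with
  | zero => exact Or.inl rfl
  | succ n ih =>
    have hne := hnt n
    rcases ih with h | ⟨a, h, ha⟩ | ⟨a, h, ha⟩ | ⟨a, j, h, ha1, ha2⟩
    · have hc : cand (signState x n) = 0 := by rw [h]; rfl
      rw [signState_succ, hc, h]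
      rcases lt_trichotomy (0:ℝ) x with h1 | h1 | h1
      · rw [if_pos h1]
        exact Or.inr (Or.inl ⟨0, by norm_num, by norm_num [h1]⟩)
      · exact absurd (hc.trans h1) hne
      · rw [if_neg (not_lt.2 h1.le), if_pos h1]
        exact Or.inr (Or.inr (Or.inl ⟨0, by norm_num, by norm_num [h1]⟩))
    · have hc : cand (signState x n) = (a:ℝ) + 1 := by rw [h]; rfl
      rw [signState_succ, hc, h]
      rcases lt_trichotomy ((a:ℝ)+1) x with h1 | h1 | h1
      · rw [if_pos h1]
        exact Or.inr (Or.inl ⟨a+1, by push_cast; norm_num, by push_cast; linarith⟩)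
      · exact absurd (hc.trans h1) hne
      · rw [if_neg (not_lt.2 h1.le), if_pos h1]
        refine Or.inr (Or.inr (Or.inr ⟨a, 0, by push_cast; norm_num, by push_cast; norm_num; linarith, by push_cast; norm_num; linarith⟩))
    · have hc : cand (signState x n) = (a:ℝ) - 1 := by rw [h]; rfl
      rw [signState_succ, hc, h]
      rcases lt_trichotomy ((a:ℝ)-1) x with h1 | h1 | h1
      · rw [if_pos h1]
        refine Or.inr (Or.inr (Or.inr ⟨a-1, 0, by push_cast; norm_num, by push_cast; norm_num; linarith, by push_cast; norm_num; linarith⟩))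
      · exact absurd (hc.trans h1) hne
      · rw [if_neg (not_lt.2 h1.le), if_pos h1]
        exact Or.inr (Or.inr (Or.inl ⟨a-1, by push_cast; norm_num, by push_cast; linarith⟩))
    · have hc : cand (signState x n) = ((2*(a:ℝ)+1)/2^(j+1)) := by
        rw [h]
        show ((a:ℝ)/2^j + ((a:ℝ)+1)/2^j) / 2 = _
        rw [pow_succ]; field_simp; ring
      rw [signState_succ, hc, h]
      rcases lt_trichotomy ((2*(a:ℝ)+1)/2^(j+1)) x with h1 | h1 | h1
      · rw [if_pos h1]
        refine Or.inr (Or.inr (Or.inr ⟨2*a+1, j+1, ?_, by push_cast; linarith, ?_⟩))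
        · push_cast; rw [Prod.ext_iff]; constructor
          · norm_num
          · show some (((a:ℝ)+1)/2^j) = some ((2*(a:ℝ)+1+1)/2^(j+1))
            congr 1; rw [pow_succ]; field_simp; ring
        · push_cast
          have : (2*(a:ℝ)+1+1)/2^(j+1) = ((a:ℝ)+1)/2^j := by rw [pow_succ]; field_simp; ring
          rw [this]; exact ha2
      · exact absurd (hc.trans h1) hne
      · rw [if_neg (not_lt.2 h1.le), if_pos h1]
        refine Or.inr (Or.inr (Or.inr ⟨2*a, j+1, ?_, ?_, by push_cast; linarith⟩))
        · push_cast; rw [Prod.ext_iff]; constructor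
          · show some ((a:ℝ)/2^j) = some ((2*(a:ℝ))/2^(j+1))
            congr 1; rw [pow_succ]; field_simp
          · norm_num
        · push_cast
          have : (2*(a:ℝ))/2^(j+1) = (a:ℝ)/2^j := by rw [pow_succ]; field_simp
          rw [this]; exact ha1

lemma isSome_fst_mono (x : ℝ) (n : ℕ) (h : (signState x n).1.isSome) :
    (signState x (n+1)).1.isSome := by
  rw [signState_succ]; split_ifs <;> simp_all

lemma isSome_snd_mono (x : ℝ) (n : ℕ) (h : (signState x n).2.isSome) :
    (signState x (n+1)).2.isSome := by
  rw [signState_succ]; split_ifs <;> simp_all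

/-- If the second component is never set, states march upward through the integers. -/
lemma snd_none_march (x : ℝ) (hnt : ∀ n, cand (signState x n) ≠ x)
    (H : ∀ n, (signState x n).2 = none) (n : ℕ) :
    signState x (n+1) = (some (n:ℝ), none) := by
  induction n with
  | zero =>
    have hc : cand (signState x 0) = 0 := rfl
    have h0 : (0:ℝ) < x := by
      rcases lt_trichotomy (0:ℝ) x with h1 | h1 | h1
      · exact h1
      · exact absurd (hc.trans h1) (hnt 0)
      · exfalso
        have := H 1
        rw [signState_succ, hc] at this
        rw [if_neg (not_lt.2 h1.le), if_pos h1] at this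
        simp [signState] at this
    rw [show (1:ℕ) = 0 + 1 from rfl, signState_succ, hc, if_pos h0]
    simp [signState]
  | succ n ih =>
    have hc : cand (signState x (n+1)) = (n:ℝ) + 1 := by rw [ih]; rfl
    have h0 : (n:ℝ) + 1 < x := by
      rcases lt_trichotomy ((n:ℝ)+1) x with h1 | h1 | h1
      · exact h1
      · exact absurd (hc.trans h1) (hnt (n+1))
      · exfalso
        have := H (n+2)
        rw [show n+2 = (n+1)+1 from rfl, signState_succ, hc] at this
        rw [if_neg (not_lt.2 h1.le), if_pos h1] at this
        simp at this
    rw [signState_succ, hc, if_pos h0, ih]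
    push_cast; rfl

lemma fst_none_march (x : ℝ) (hnt : ∀ n, cand (signState x n) ≠ x)
    (H : ∀ n, (signState x n).1 = none) (n : ℕ) :
    signState x (n+1) = (none, some (-(n:ℝ))) := by
  induction n with
  | zero =>
    have hc : cand (signState x 0) = 0 := rfl
    have h0 : x < 0 := by
      rcases lt_trichotomy (0:ℝ) x with h1 | h1 | h1
      · exfalso
        have := H 1
        rw [signState_succ, hc, if_pos h1] at this
        simp at this
      · exact absurd (hc.trans h1) (hnt 0)
      · exact h1
    rw [show (1:ℕ) = 0 + 1 from rfl, signState_succ, hc,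
      if_neg (not_lt.2 h0.le), if_pos h0]
    simp [signState]
  | succ n ih =>
    have hc : cand (signState x (n+1)) = -(n:ℝ) - 1 := by rw [ih]; rfl
    have h0 : x < -(n:ℝ) - 1 := by
      rcases lt_trichotomy (-(n:ℝ)-1) x with h1 | h1 | h1
      · exfalso
        have := H (n+2)
        rw [show n+2 = (n+1)+1 from rfl, signState_succ, hc, if_pos h1] at this
        simp at this
      · exact absurd (hc.trans h1) (hnt (n+1))
      · exact h1
    rw [signState_succ, hc, if_neg (not_lt.2 h0.le), if_pos h0, ih]
    push_cast
    rw [Prod.ext_iff]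
    constructor
    · rfl
    · show some (-(n:ℝ) - 1) = some (-((n:ℝ)+1)); congr 1; ring

lemma isSome_fst_le (x : ℝ) {n n' : ℕ} (h : n ≤ n') (hs : (signState x n).1.isSome) :
    (signState x n').1.isSome := by
  induction n', h using Nat.le_induction with
  | base => exact hs
  | succ n' hle ih => exact isSome_fst_mono x n' ih

lemma isSome_snd_le (x : ℝ) {n n' : ℕ} (h : n ≤ n') (hs : (signState x n).2.isSome) :
    (signState x n').2.isSome := by
  induction n', h using Nat.le_induction with
  | base => exact hs
  | succ n' hle ih => exact isSome_snd_mono x n' ih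

/-- Termination: for a dyadic `x` the candidate eventually equals `x`. -/
lemma signState_terminates (x : ℝ) (hx : IsDyadic x) :
    ∃ n, cand (signState x n) = x := by
  by_contra hnt
  push_neg at hnt
  obtain ⟨p, m, hpm⟩ := hx
  -- both components eventually some
  have hbnd := fun n => signState_bounds x n
  have h2 : ∃ n, (signState x n).2.isSome := by
    by_contra h
    push_neg at h
    have H : ∀ n, (signState x n).2 = none := fun n =>
      Option.not_isSome_iff_eq_none.1 (h n)
    obtain ⟨n, hn⟩ := exists_nat_gt x
    have := snd_none_march x hnt H n
    have hl := (hbnd (n+1)).1 (n:ℝ) (by rw [this])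
    linarith
  have h1 : ∃ n, (signState x n).1.isSome := by
    by_contra h
    push_neg at h
    have H : ∀ n, (signState x n).1 = none := fun n =>
      Option.not_isSome_iff_eq_none.1 (h n)
    obtain ⟨n, hn⟩ := exists_nat_gt (-x)
    have := fst_none_march x hnt H n
    have hu := (hbnd (n+1)).2 (-(n:ℝ)) (by rw [this])
    linarith
  obtain ⟨n1, hn1⟩ := h1
  obtain ⟨n2, hn2⟩ := h2
  set n0 := max n1 n2 with hn0
  have hb1 : (signState x n0).1.isSome := isSome_fst_le x (le_max_left n1 n2) hn1
  have hb2 : (signState x n0).2.isSome := isSome_snd_le x (le_max_right n1 n2) hn2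
  -- the state at n0 has the dyadic interval shape; then intervals shrink forever
  have key : ∀ k, ∃ (a : ℤ) (j : ℕ), k ≤ j ∧
      signState x (n0 + k) = (some ((a:ℝ)/2^j), some (((a:ℝ)+1)/2^j)) ∧
      (a:ℝ)/2^j < x ∧ x < ((a:ℝ)+1)/2^j := by
    intro k
    induction k with
    | zero =>
      rcases signState_shape x hnt n0 with h | ⟨a, h, _⟩ | ⟨a, h, _⟩ | ⟨a, j, h, ha1, ha2⟩
      · rw [h] at hb1; simp at hb1
      · rw [h] at hb2; simp at hb2
      · rw [h] at hb1; simp at hb1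
      · exact ⟨a, j, Nat.zero_le _, h, ha1, ha2⟩
    | succ k ih =>
      obtain ⟨a, j, hkj, h, ha1, ha2⟩ := ih
      have hc : cand (signState x (n0+k)) = (2*(a:ℝ)+1)/2^(j+1) := by
        rw [h]
        show ((a:ℝ)/2^j + ((a:ℝ)+1)/2^j) / 2 = _
        rw [pow_succ]; field_simp; ring
      have hstep : n0 + (k+1) = (n0+k) + 1 := rfl
      rcases lt_trichotomy ((2*(a:ℝ)+1)/2^(j+1)) x with h1 | h1 | h1
      · refine ⟨2*a+1, j+1, by omega, ?_, by push_cast; linarith, ?_⟩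
        · rw [hstep, signState_succ, hc, if_pos h1, h]
          push_cast
          rw [Prod.ext_iff]
          refine ⟨rfl, ?_⟩
          show some (((a:ℝ)+1)/2^j) = some ((2*(a:ℝ)+1+1)/2^(j+1))
          congr 1; rw [pow_succ]; field_simp; ring
        · push_cast
          have : (2*(a:ℝ)+1+1)/2^(j+1) = ((a:ℝ)+1)/2^j := by rw [pow_succ]; field_simp; ring
          rw [this]; exact ha2
      · exact absurd (hc.trans h1) (hnt _)
      · refine ⟨2*a, j+1, by omega, ?_, ?_, by push_cast; linarith⟩
        · rw [hstep, signState_succ, hc, if_neg (not_lt.2 h1.le), if_pos h1, h]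
          push_cast
          rw [Prod.ext_iff]
          refine ⟨?_, rfl⟩
          show some ((a:ℝ)/2^j) = some ((2*(a:ℝ))/2^(j+1))
          congr 1; rw [pow_succ]; field_simp
        · push_cast
          have : (2*(a:ℝ))/2^(j+1) = (a:ℝ)/2^j := by rw [pow_succ]; field_simp
          rw [this]; exact ha1
  -- contradiction: interval of width 2^{-j}, j ≥ m, around p/2^m
  obtain ⟨a, j, hmj, _, ha1, ha2⟩ := key m
  set z : ℤ := p * 2^(j-m) with hz
  have hzr : (z:ℝ)/2^j = (p:ℝ)/2^m := by
    rw [hz]; push_cast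
    rw [div_eq_div_iff (by positivity) (by positivity), mul_assoc, ← pow_add,
      Nat.sub_add_cancel hmj]
  rw [hpm, ← hzr] at ha1 ha2
  have h2j : (0:ℝ) < 2^j := by positivity
  have h1 : (a:ℝ) < (z:ℝ) := (div_lt_div_iff_of_pos_right h2j).1 ha1
  have h2 : (z:ℝ) < (a:ℝ) + 1 := (div_lt_div_iff_of_pos_right h2j).1 ha2
  have h1' : a < z := by exact_mod_cast h1
  have h2' : z < a + 1 := by exact_mod_cast h2
  omega

noncomputable def tailSt (x : ℝ) (N : ℕ) : ℕ → Option ℝ × Option ℝ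
  | 0 => (some x, (signState x N).2)
  | k+1 => ((tailSt x N k).1, some (cand (tailSt x N k)))

lemma tailSt_fst (x : ℝ) (N : ℕ) (k : ℕ) : (tailSt x N k).1 = some x := by
  induction k with
  | zero => rfl
  | succ k ih => rw [tailSt, ih]

lemma tailSt_cand_gt (x : ℝ) (N : ℕ) (k : ℕ) : x < cand (tailSt x N k) := by
  induction k with
  | zero =>
    show x < cand (some x, (signState x N).2)
    cases h : (signState x N).2 with
    | none => show x < x + 1; linarith
    | some u =>
      have := (signState_bounds x N).2 u h
      show x < (x + u)/2; linarith
  | succ k ih =>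
    have h1 := tailSt_fst x N k
    show x < cand ((tailSt x N k).1, some (cand (tailSt x N k)))
    rw [h1]
    show x < (x + cand (tailSt x N k))/2
    linarith

lemma tailSt_cand_lt (x : ℝ) (N : ℕ) (k : ℕ) :
    cand (tailSt x N (k+1)) < cand (tailSt x N k) := by
  have h1 := tailSt_fst x N k
  have h2 := tailSt_cand_gt x N k
  show cand ((tailSt x N k).1, some (cand (tailSt x N k))) < _
  rw [h1]
  show (x + cand (tailSt x N k))/2 < _
  linarith

lemma tailSt_cand_anti (x : ℝ) (N : ℕ) {k k' : ℕ} (h : k ≤ k') :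
    cand (tailSt x N k') ≤ cand (tailSt x N k) := by
  induction k', h using Nat.le_induction with
  | base => exact le_refl _
  | succ k' hle ih => exact le_trans (tailSt_cand_lt x N k').le ih

lemma tailSt_state (x y : ℝ) (N : ℕ) (hstN : signState y N = signState x N)
    (hcN : cand (signState x N) = x) (hxy : x < y) :
    ∀ k, y < cand (tailSt x N k) → signState y (N + 1 + k) = tailSt x N k := by
  intro k
  induction k with
  | zero =>
    intro _
    rw [show N + 1 + 0 = N + 1 from rfl, signState_succ, hstN, hcN, if_pos hxy]
    rfl
  | succ k ih =>
    intro hy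
    have hyk : y < cand (tailSt x N k) := lt_trans hy (tailSt_cand_lt x N k)
    have hst := ih hyk
    rw [show N + 1 + (k+1) = (N + 1 + k) + 1 from rfl, signState_succ, hst,
      if_neg (not_lt.2 hyk.le), if_pos hyk]
    rfl

lemma signState_eq_of_ge (x : ℝ) (N : ℕ) (hcN : cand (signState x N) = x) {k : ℕ}
    (h : N ≤ k) : signState x k = signState x N := by
  obtain ⟨j, rfl⟩ := Nat.exists_eq_add_of_le h
  exact signState_stationary x N hcN j

lemma signAt_none_of_ge (x : ℝ) (N : ℕ) (hcN : cand (signState x N) = x) {k : ℕ}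
    (h : N ≤ k) : signAt x k = none := by
  have := signState_eq_of_ge x N hcN h
  simp [signAt, this, hcN]

lemma signAt_isSome_of_lt (x : ℝ) (N : ℕ) (hN2 : ∀ k < N, cand (signState x k) ≠ x)
    {k : ℕ} (h : k < N) : (signAt x k).isSome := by
  have := hN2 k h
  rcases lt_trichotomy (cand (signState x k)) x with h1 | h1 | h1
  · rw [signAt_eq_of_lt x k h1]; rfl
  · exact absurd h1 this
  · rw [signAt_eq_of_gt x k h1]; rfl

/-- The key epsilon lemma: all signs up to `N + 1 + m` of any `y` slightly above `x`
agree with the expansion of `x` followed by `+` and minuses. -/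
lemma key_eps (x : ℝ) (N : ℕ) (hcN : cand (signState x N) = x)
    (hN2 : ∀ k < N, cand (signState x k) ≠ x) (m : ℕ) :
    ∃ ε > 0, ∀ y : ℝ, x < y → y < x + ε → ∀ n ≤ N + 1 + m,
      signAt y n = (if n < N then signAt x n else if n = N then some true else some false) := by
  obtain ⟨ε₁, hε₁, hstab⟩ := signState_stable x N hN2
  refine ⟨min ε₁ (cand (tailSt x N m) - x),
    lt_min hε₁ (by linarith [tailSt_cand_gt x N m]), fun y hy1 hy2 n hn => ?_⟩
  have hyabs : |y - x| < ε₁ := by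
    rw [abs_of_pos (by linarith)]
    exact lt_of_lt_of_le (by linarith) (min_le_left _ _)
  have hym : y < cand (tailSt x N m) := by
    have := lt_of_lt_of_le (show y - x < _ by linarith) (min_le_right _ _)
    linarith
  obtain ⟨hst, hsa⟩ := hstab y hyabs
  rcases lt_trichotomy n N with h1 | h1 | h1
  · rw [if_pos h1]; exact hsa n h1
  · subst h1
    rw [if_neg (lt_irrefl n), if_pos rfl]
    exact signAt_eq_of_lt y n (by rw [hst n le_rfl, hcN]; exact hy1)
  · rw [if_neg (not_lt.2 h1.le), if_neg (Nat.ne_of_gt h1)]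
    obtain ⟨k, hk⟩ : ∃ k, n = N + 1 + k := ⟨n - (N+1), by omega⟩
    have hkm : k ≤ m := by omega
    have hyk : y < cand (tailSt x N k) :=
      lt_of_lt_of_le hym (tailSt_cand_anti x N hkm)
    have := tailSt_state x y N (hst N le_rfl) hcN hy1 k hyk
    subst hk
    exact signAt_eq_of_gt y _ (by rw [this]; exact hyk)







lemma signExp_natCast (y : ℝ) (n : ℕ) : signExp y (n : Ordinal) = signAt y n := by
  have h : ∃ k : ℕ, (n : Ordinal) = (k : Ordinal) := ⟨n, rfl⟩
  rw [signExp, dif_pos h]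
  congr 1
  exact_mod_cast h.choose_spec.symm

lemma signExp_of_omega_le (y : ℝ) {γ : Ordinal} (h : Ordinal.omega0 ≤ γ) :
    signExp y γ = none := by
  rw [signExp, dif_neg]
  rintro ⟨n, rfl⟩
  exact absurd h (not_le.2 (Ordinal.nat_lt_omega0 n))

lemma strLength_signExp (x : ℝ) (N : ℕ) (hcN : cand (signState x N) = x)
    (hN2 : ∀ k < N, cand (signState x k) ≠ x) :
    strLength (signExp x) = (N : Ordinal) := by
  have hmem : (N : Ordinal) ∈ {γ | signExp x γ = none} := by
    simp only [Set.mem_setOf_eq, signExp_natCast]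
    exact signAt_none_of_ge x N hcN le_rfl
  refine le_antisymm (csInf_le' hmem) (le_csInf ⟨_, hmem⟩ fun b hb => ?_)
  by_contra hlt
  push_neg at hlt
  obtain ⟨k, rfl⟩ := Ordinal.lt_omega0.1 (hlt.trans (Ordinal.nat_lt_omega0 N))
  have hkN : k < N := by exact_mod_cast hlt
  rw [Set.mem_setOf_eq, signExp_natCast] at hb
  have := signAt_isSome_of_lt x N hN2 hkN
  rw [hb] at this
  exact absurd this (by simp)

lemma rhs_nat (x : ℝ) (N : ℕ) (hcN : cand (signState x N) = x)
    (hN2 : ∀ k < N, cand (signState x k) ≠ x) (n : ℕ) :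
    strAppend (signExp x) oneOverOmega (n : Ordinal) =
      (if n < N then signAt x n else if n = N then some true else some false) := by
  rw [strAppend, strLength_signExp x N hcN hN2]
  by_cases h1 : n < N
  · rw [if_pos (by exact_mod_cast h1), if_pos h1, signExp_natCast]
  · rw [if_neg (by exact_mod_cast h1), if_neg h1]
    have hsub : (n : Ordinal) - (N : Ordinal) = ((n - N : ℕ) : Ordinal) :=
      (Ordinal.natCast_sub n N).symm
    rw [hsub, oneOverOmega]
    by_cases h2 : n = N
    · rw [if_pos (by exact_mod_cast (by omega : (n - N : ℕ) = 0)), if_pos h2]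
    · rw [if_neg (by exact_mod_cast (by omega : (n - N : ℕ) ≠ 0)), if_neg h2,
        if_pos (Ordinal.nat_lt_omega0 _)]

lemma rhs_omega (x : ℝ) (N : ℕ) (hcN : cand (signState x N) = x)
    (hN2 : ∀ k < N, cand (signState x k) ≠ x) {γ : Ordinal}
    (h : Ordinal.omega0 ≤ γ) :
    strAppend (signExp x) oneOverOmega γ = none := by
  rw [strAppend, strLength_signExp x N hcN hN2,
    if_neg (not_lt.2 (le_trans (Ordinal.nat_lt_omega0 N).le h)), oneOverOmega]
  have hNγ : (N : Ordinal) ≤ γ := le_trans (Ordinal.nat_lt_omega0 N).le h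
  rw [if_neg, if_neg]
  · intro hlt
    have := Ordinal.add_sub_cancel_of_le hNγ
    obtain ⟨k, hk⟩ := Ordinal.lt_omega0.1 hlt
    have hγ : γ = ((N + k : ℕ) : Ordinal) := by
      rw [← this, hk]; push_cast; rfl
    exact absurd h (not_le.2 (hγ ▸ Ordinal.nat_lt_omega0 (N + k)))
  · rw [Ordinal.sub_eq_zero_iff_le]
    intro hle
    exact absurd h (not_le.2 (lt_of_le_of_lt hle (Ordinal.nat_lt_omega0 N)))


open Filter Topology in
/-- If a sequence of reals converges classically to a dyadic rational `x` and
`r n > x` for all but finitely many `n`, then the s-limit of the sign expansions is the sign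
expansion of `x + 1/ω`, namely the (finite) expansion of `x` followed by one `+` and ω minuses. -/
theorem slim_signExp_of_tendsto_dyadic_from_above (r : ℕ → ℝ) (x : ℝ)
    (hconv : Tendsto r atTop (𝓝 x)) (hx : IsDyadic x)
    (habove : ∀ᶠ n in atTop, x < r n) :
    slim (fun n => signExp (r n)) = strAppend (signExp x) oneOverOmega := by
  have hT := signState_terminates x hx
  set N := Nat.find hT with hNdef
  have hcN : cand (signState x N) = x := Nat.find_spec hT
  have hN2 : ∀ k < N, cand (signState x k) ≠ x := fun k hk => Nat.find_min hT hk
  funext γ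
  rcases lt_or_ge γ Ordinal.omega0 with hγ | hγ
  · -- finite position
    obtain ⟨k, rfl⟩ := Ordinal.lt_omega0.1 hγ
    rw [rhs_nat x N hcN hN2 k]
    obtain ⟨ε, hε, hkey⟩ := key_eps x N hcN hN2 k
    have h1 : ∀ᶠ n in atTop, r n < x + ε := hconv.eventually_lt_const (by linarith)
    obtain ⟨l0, hl0⟩ := eventually_atTop.1 (habove.and h1)
    set target : ℕ → Option Bool :=
      fun j => if j < N then signAt x j else if j = N then some true else some false with htarget
    have hsig : ∀ l, l0 ≤ l → ∀ j, j ≤ N + 1 + k → signAt (r l) j = target j := fun l hl j hj =>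
      hkey (r l) (hl0 l hl).1 (hl0 l hl).2 j hj
    have htS : ∀ j, (target j).isSome := by
      intro j
      rw [htarget]
      simp only
      split_ifs with h1 h2
      · exact signAt_isSome_of_lt x N hN2 h1
      · rfl
      · rfl
    have hcond : ∃ m0 : ℕ, ∀ m' ≤ (k : Ordinal), ∀ l, m0 ≤ l → ∀ l', m0 ≤ l' →
        (fun n => signExp (r n)) l m' = (fun n => signExp (r n)) l' m' ∧
        ((fun n => signExp (r n)) l m').isSome := by
      refine ⟨l0, fun m' hm' l hl l' hl' => ?_⟩
      obtain ⟨j, rfl⟩ := Ordinal.lt_omega0.1 (lt_of_le_of_lt hm' (Ordinal.nat_lt_omega0 k))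
      have hjk : j ≤ k := by exact_mod_cast hm'
      simp only [signExp_natCast]
      rw [hsig l hl j (by omega), hsig l' hl' j (by omega)]
      exact ⟨rfl, htS j⟩
    rw [slim, dif_pos hcond]
    set l1 := hcond.choose with hl1
    have hspec := hcond.choose_spec
    have h2 := (hspec (k : Ordinal) le_rfl l1 le_rfl (max l1 l0) (le_max_left _ _)).1
    simp only at h2 ⊢
    rw [h2, signExp_natCast, hsig (max l1 l0) (le_max_right _ _) k (by omega)]
  · -- infinite position
    rw [rhs_omega x N hcN hN2 hγ, slim, dif_neg]
    rintro ⟨l0, hl0⟩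
    have h2 := (hl0 γ le_rfl l0 le_rfl l0 le_rfl).2
    rw [signExp_of_omega_le (r l0) hγ] at h2
    exact absurd h2 (by simp)
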